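/- Let b be a planar binary tree with β ≥ 2 leaves. Then there is a unique planar binary tree A with K leaves and a unique tuple Ê ∈ {ε,Y}^K with n_Y(Ê) = L = β − K such that Ê∝A = b, where L is the maximal number of Y's that can appear in any growing representation of b; moreover A is obtained from b by deleting all pairs of leaves that are the two children of a common internal vertex. -/
import Mathlib


/-- Planar binary trees: a leaf `ε`, or a grafting `B₊(b₁,b₂)` of two trees under a new root. -/
inductive PBT : Type
  | leaf : PBT
  | node : PBT → PBT → PBT
  deriving DecidableEq

namespace PBT

/-- The number of internal vertices `|b|`. -/
def internal : PBT → ℕ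
  | leaf => 0
  | node b₁ b₂ => internal b₁ + internal b₂ + 1

/-- The number of leaves `‖b‖`. -/
def leaves : PBT → ℕ
  | leaf => 1
  | node b₁ b₂ => leaves b₁ + leaves b₂

/-- The tree `Y` with one internal vertex and two leaves. -/
def Y : PBT := node leaf leaf

/-- Helper for grafting: replaces the leaves of the first argument, in left-to-right
order, by the entries of the list, returning the grown tree and the unused entries. -/
def graftAux : PBT → List PBT → PBT × List PBT
  | leaf, [] => (leaf, [])
  | leaf, e :: rest => (e, rest)
  | node a b, l =>
      let p := graftAux a l
      let q := graftAux b p.2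
      (node p.1 q.1, q.2)

/-- The growing `E ∝ a`: replace the i-th leaf of `a` by the i-th entry of `E`. -/
def graft (a : PBT) (E : List PBT) : PBT := (graftAux a E).1

/-- `Rep b a E` : the pair `(a, E)` is a growing representation of `b`,
i.e. `E ∈ {ε,Y}^‖a‖` and `E ∝ a = b`. -/
def Rep (b a : PBT) (E : List PBT) : Prop :=
  (∀ e ∈ E, e = leaf ∨ e = Y) ∧ E.length = a.leaves ∧ graft a E = b

end PBT

namespace PBT

/-- Contracting a tree: delete every pair of leaves that are the two children of a
common internal vertex (replace each such cherry by a leaf). -/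
def contract : PBT → PBT
  | leaf => leaf
  | node leaf leaf => leaf
  | node a b => node (contract a) (contract b)

def canonE : PBT → List PBT
  | leaf => [leaf]
  | node leaf leaf => [Y]
  | node a b => canonE a ++ canonE b

example : contract (node leaf (node leaf leaf)) = node leaf leaf := rfl
example (x y a : PBT) : contract (node (node x y) a) = node (contract (node x y)) (contract a) := rfl
example (x y a : PBT) : contract (node a (node x y)) = node (contract a) (contract (node x y)) := by
  cases a <;> rfl
example (x y a : PBT) : canonE (node a (node x y)) = canonE a ++ canonE (node x y) := by
  cases a <;> rfl

lemma one_le_leaves (a : PBT) : 1 ≤ a.leaves := by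
  induction a with
  | leaf => simp [leaves]
  | node a b ih ih' => simp [leaves]; omega

lemma graftAux_append (a : PBT) : ∀ E₁ E₂ : List PBT, E₁.length = a.leaves →
    graftAux a (E₁ ++ E₂) = ((graftAux a E₁).1, E₂) := by
  induction a with
  | leaf =>
    intro E₁ E₂ h
    match E₁, h with
    | [e], _ => rfl
  | node a b iha ihb =>
    intro E₁ E₂ h
    have hla : a.leaves ≤ E₁.length := by simp [leaves] at h; omega
    have h1 : (E₁.take a.leaves).length = a.leaves := by simp [hla]
    have h2 : (E₁.drop a.leaves).length = b.leaves := by simp [leaves] at h ⊢; omega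
    have hsplit : E₁ = E₁.take a.leaves ++ E₁.drop a.leaves := (List.take_append_drop _ _).symm
    rw [hsplit]
    show graftAux (node a b) ((E₁.take a.leaves ++ E₁.drop a.leaves) ++ E₂) = _
    rw [List.append_assoc]
    simp only [graftAux]
    rw [iha _ _ h1, iha _ (E₁.drop a.leaves) h1]
    simp only []
    rw [ihb _ _ h2]

lemma graft_node (a₁ a₂ : PBT) (E₁ E₂ : List PBT) (h : E₁.length = a₁.leaves) :
    graft (node a₁ a₂) (E₁ ++ E₂) = node (graft a₁ E₁) (graft a₂ E₂) := by
  simp only [graft, graftAux]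
  rw [graftAux_append _ _ _ h]

lemma rep_node_mk {b₁ b₂ a₁ a₂ : PBT} {E₁ E₂ : List PBT}
    (h₁ : Rep b₁ a₁ E₁) (h₂ : Rep b₂ a₂ E₂) :
    Rep (node b₁ b₂) (node a₁ a₂) (E₁ ++ E₂) := by
  obtain ⟨m₁, l₁, g₁⟩ := h₁
  obtain ⟨m₂, l₂, g₂⟩ := h₂
  refine ⟨?_, ?_, ?_⟩
  · intro e he; rcases List.mem_append.1 he with h | h
    · exact m₁ e h
    · exact m₂ e h
  · simp [leaves, l₁, l₂]
  · rw [graft_node _ _ _ _ l₁, g₁, g₂]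

lemma rep_node_inv {b : PBT} {a₁ a₂ : PBT} {E : List PBT} (h : Rep b (node a₁ a₂) E) :
    ∃ b₁ b₂ E₁ E₂, b = node b₁ b₂ ∧ E = E₁ ++ E₂ ∧ Rep b₁ a₁ E₁ ∧ Rep b₂ a₂ E₂ := by
  obtain ⟨m, l, g⟩ := h
  have hla : a₁.leaves ≤ E.length := by simp [leaves] at l; omega
  set E₁ := E.take a₁.leaves with hE₁
  set E₂ := E.drop a₁.leaves with hE₂
  have h1 : E₁.length = a₁.leaves := by simp [hE₁, hla]
  have h2 : E₂.length = a₂.leaves := by simp [hE₂, leaves] at l ⊢; omega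
  have hsplit : E = E₁ ++ E₂ := (List.take_append_drop _ _).symm
  rw [hsplit, graft_node _ _ _ _ h1] at g
  refine ⟨graft a₁ E₁, graft a₂ E₂, E₁, E₂, g.symm, hsplit, ⟨?_, h1, rfl⟩, ⟨?_, h2, rfl⟩⟩
  · intro e he; exact m e (hsplit ▸ List.mem_append.2 (Or.inl he))
  · intro e he; exact m e (hsplit ▸ List.mem_append.2 (Or.inr he))

lemma rep_leaf_inv {b : PBT} {E : List PBT} (h : Rep b leaf E) :
    (b = leaf ∧ E = [leaf]) ∨ (b = Y ∧ E = [Y]) := by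
  obtain ⟨m, l, g⟩ := h
  match E, l with
  | [e], _ =>
    have : graft leaf [e] = e := rfl
    rw [this] at g
    rcases m e (by simp) with h | h
    · left; exact ⟨g ▸ h ▸ rfl, by rw [h]⟩
    · right; exact ⟨g ▸ h ▸ rfl, by rw [h]⟩

lemma canon_rep (b : PBT) : Rep b (contract b) (canonE b) := by
  induction b with
  | leaf =>
    refine ⟨fun e he => Or.inl ?_, rfl, rfl⟩
    have h' : canonE leaf = [leaf] := rfl
    rw [h'] at he
    simpa using he
  | node b₁ b₂ ih₁ ih₂ =>
    match b₁, b₂, ih₁, ih₂ with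
    | leaf, leaf, _, _ =>
      refine ⟨fun e he => Or.inr ?_, rfl, rfl⟩
      have h' : canonE (node leaf leaf) = [Y] := rfl
      rw [h'] at he
      simpa using he
    | leaf, node x y, ih₁, ih₂ =>
      exact rep_node_mk ih₁ ih₂
    | node x y, b₂, ih₁, ih₂ =>
      have hc : contract (node (node x y) b₂) = node (contract (node x y)) (contract b₂) := rfl
      have he : canonE (node (node x y) b₂) = canonE (node x y) ++ canonE b₂ := rfl
      rw [hc, he]
      exact rep_node_mk ih₁ ih₂

lemma max_and_unique (b : PBT) : ∀ a E, Rep b a E →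
    E.count Y ≤ (canonE b).count Y ∧
    (E.count Y = (canonE b).count Y → a = contract b ∧ E = canonE b) := by
  induction b with
  | leaf =>
    intro a E h
    match a with
    | leaf =>
      rcases rep_leaf_inv h with ⟨_, hE⟩ | ⟨hb, _⟩
      · subst hE; simp [canonE, contract, Y]
      · exact absurd hb (by simp [Y])
    | node a₁ a₂ =>
      obtain ⟨b₁, b₂, _, _, hb, _⟩ := rep_node_inv h
      exact absurd hb (by simp)
  | node b₁ b₂ ih₁ ih₂ =>
    intro a E h
    match a with
    | leaf =>
      rcases rep_leaf_inv h with ⟨hb, _⟩ | ⟨hb, hE⟩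
      · exact absurd hb (by simp)
      · have : b₁ = leaf ∧ b₂ = leaf := by
          rw [Y] at hb; exact ⟨by injection hb, by injection hb⟩
        obtain ⟨h1, h2⟩ := this
        subst h1; subst h2; subst hE
        refine ⟨le_refl _, fun _ => ⟨rfl, rfl⟩⟩
    | node a₁ a₂ =>
      obtain ⟨b₁', b₂', E₁, E₂, hb, hE, h1, h2⟩ := rep_node_inv h
      injection hb with e1 e2
      subst e1; subst e2; subst hE
      obtain ⟨le₁, eq₁⟩ := ih₁ _ _ h1
      obtain ⟨le₂, eq₂⟩ := ih₂ _ _ h2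
      by_cases hch : b₁ = leaf ∧ b₂ = leaf
      · obtain ⟨c1, c2⟩ := hch; subst c1; subst c2
        -- cherry case: sub-reps are of leaf, so counts are 0, canonE is [Y] with count 1
        have e₁0 : E₁.count Y = 0 := by
          have ha₁ : a₁ = leaf := by
            cases a₁ with
            | leaf => rfl
            | node x y =>
              obtain ⟨c₁, c₂, _, _, hb', _⟩ := rep_node_inv h1
              exact absurd hb' (by simp)
          subst ha₁
          rcases rep_leaf_inv h1 with ⟨_, hE⟩ | ⟨hc, _⟩
          · subst hE; simp [Y]
          · exact absurd hc (by simp [Y])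
        have e₂0 : E₂.count Y = 0 := by
          have ha₂ : a₂ = leaf := by
            cases a₂ with
            | leaf => rfl
            | node x y =>
              obtain ⟨c₁, c₂, _, _, hb', _⟩ := rep_node_inv h2
              exact absurd hb' (by simp)
          subst ha₂
          rcases rep_leaf_inv h2 with ⟨_, hE⟩ | ⟨hc, _⟩
          · subst hE; simp [Y]
          · exact absurd hc (by simp [Y])
        simp [canonE, List.count_append, e₁0, e₂0]
      · have hce : canonE (node b₁ b₂) = canonE b₁ ++ canonE b₂ := by
          cases b₁ with
          | leaf => cases b₂ with
            | leaf => exact absurd ⟨rfl, rfl⟩ hch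
            | node x y => rfl
          | node x y => rfl
        have hcc : contract (node b₁ b₂) = node (contract b₁) (contract b₂) := by
          cases b₁ with
          | leaf => cases b₂ with
            | leaf => exact absurd ⟨rfl, rfl⟩ hch
            | node x y => rfl
          | node x y => rfl
        rw [hce, hcc]
        simp only [List.count_append]
        constructor
        · omega
        · intro heq
          have q₁ : E₁.count Y = (canonE b₁).count Y := by omega
          have q₂ : E₂.count Y = (canonE b₂).count Y := by omega
          obtain ⟨ra₁, rE₁⟩ := eq₁ q₁
          obtain ⟨ra₂, rE₂⟩ := eq₂ q₂
          rw [ra₁, ra₂, rE₁, rE₂]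
          exact ⟨rfl, rfl⟩

lemma leaves_contract_add (b : PBT) : b.leaves = (contract b).leaves + (canonE b).count Y := by
  induction b with
  | leaf => simp [contract, canonE, leaves, Y]
  | node b₁ b₂ ih₁ ih₂ =>
    by_cases hch : b₁ = leaf ∧ b₂ = leaf
    · obtain ⟨c1, c2⟩ := hch; subst c1; subst c2
      simp [contract, canonE, leaves, Y]
    · have hce : canonE (node b₁ b₂) = canonE b₁ ++ canonE b₂ := by
        cases b₁ with
        | leaf => cases b₂ with
          | leaf => exact absurd ⟨rfl, rfl⟩ hch
          | node x y => rfl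
        | node x y => rfl
      have hcc : contract (node b₁ b₂) = node (contract b₁) (contract b₂) := by
        cases b₁ with
        | leaf => cases b₂ with
          | leaf => exact absurd ⟨rfl, rfl⟩ hch
          | node x y => rfl
        | node x y => rfl
      rw [hce, hcc]
      simp only [leaves, List.count_append]
      omega

end PBT

/-- For a planar binary tree `b` with `β ≥ 2` leaves, letting `L` be the maximal number
of `Y`'s appearing in any growing representation of `b`, there is a unique pair
`(A, Ê)` with `Ê ∈ {ε,Y}^K`, `n_Y(Ê) = L` and `Ê ∝ A = b`; moreover `A` is the tree
obtained from `b` by deleting all cherries, and `A` has `K = β − L` leaves. -/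
theorem exists_unique_maximal_contraction (b : PBT) (hb : 2 ≤ b.leaves) (L : ℕ)
    (hL : IsGreatest {i : ℕ | ∃ a E, PBT.Rep b a E ∧ E.count PBT.Y = i} L) :
    (∃! p : PBT × List PBT, PBT.Rep b p.1 p.2 ∧ p.2.count PBT.Y = L) ∧
    ∀ a E, PBT.Rep b a E → E.count PBT.Y = L →
      a = PBT.contract b ∧ a.leaves = b.leaves - L := by
  have hc := PBT.canon_rep b
  have hmem : (PBT.canonE b).count PBT.Y ∈ {i : ℕ | ∃ a E, PBT.Rep b a E ∧ E.count PBT.Y = i} :=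
    ⟨_, _, hc, rfl⟩
  have hLc : L = (PBT.canonE b).count PBT.Y := by
    obtain ⟨a, E, hrep, hcount⟩ := hL.1
    have h1 := (PBT.max_and_unique b a E hrep).1
    have h2 := hL.2 hmem
    omega
  constructor
  · refine ⟨(PBT.contract b, PBT.canonE b), ⟨hc, hLc.symm⟩, ?_⟩
    rintro ⟨a, E⟩ ⟨hrep, hcount⟩
    obtain ⟨ha, hE⟩ := (PBT.max_and_unique b a E hrep).2 (hcount.trans hLc)
    simp [ha, hE]
  · intro a E hrep hcount
    obtain ⟨ha, hE⟩ := (PBT.max_and_unique b a E hrep).2 (by omega)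
    refine ⟨ha, ?_⟩
    have hsum := PBT.leaves_contract_add b
    rw [ha]
    omega
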